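/- A position M = (n_0, n_1, n_2, n_3, n_4, n_5) in extended circular nim ECN(6_{2,3}, 3) is a P-position if and only if some cyclic rotation or reflection of M lies in the set P = {(n_0,...,n_5) : n_0 + n_2 + n_4 = n_1 + n_3 + n_5, n_0 ⊕ n_1 ⊕ n_2 = 0, n_0 ≤ n_3, n_1 ≤ n_4, n_2 ≤ n_5}. -/

import Mathlib

/-- `IsN move x`: `x` is an N-position (next player wins) for the game with
move relation `move` (least fixed point; correct for short games). -/
inductive IsN {α : Type*} (move : α → α → Prop) : α → Prop
  | intro (x y : α) (hxy : move x y) (hy : ∀ z, move y z → IsN move z) : IsN move x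

/-- `IsP move x`: `x` is a P-position (previous player wins) under normal play. -/
def IsP {α : Type*} (move : α → α → Prop) (x : α) : Prop :=
  ∀ y, move x y → IsN move y

/-- Move relation of extended circular nim `ECN(m_S, k)`: reduce some piles,
all lying among `k` piles taken every `s`-th pile (for some `s ∈ S`) starting
at some index `i`, removing at least one token in total. -/
def ecnMove (m : ℕ) (S : Set ℕ) (k : ℕ) (x y : Fin m → ℕ) : Prop :=
  y ≠ x ∧ (∀ j, y j ≤ x j) ∧
    ∃ s ∈ S, ∃ i : ℕ, ∀ j : Fin m, y j ≠ x j → ∃ t < k, (j : ℕ) = (i + t * s) % m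

/-- `cyc m Q n` : some cyclic rotation of `n`, or of its reversal, satisfies `Q`
(the relation `M ∈_↻ P`). -/
def cyc (m : ℕ) (Q : (Fin m → ℕ) → Prop) (n : Fin m → ℕ) : Prop :=
  ∃ r : ℕ,
    Q (fun j => n ⟨(j.1 + r) % m, Nat.mod_lt _ (Nat.lt_of_le_of_lt (Nat.zero_le _) j.isLt)⟩) ∨
    Q (fun j => n ⟨(r + (m - j.1)) % m, Nat.mod_lt _ (Nat.lt_of_le_of_lt (Nat.zero_le _) j.isLt)⟩)

set_option maxHeartbeats 1600000

def Cv (x : Fin 6 → ℕ) : Prop :=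
  x 0 + x 2 + x 4 = x 1 + x 3 + x 5 ∧
  min (x 0) (x 3) ^^^ min (x 1) (x 4) ^^^ min (x 2) (x 5) = 0

instance : Std.Associative (α := ℕ) (· ^^^ ·) := ⟨Nat.xor_assoc⟩
instance : Std.Commutative (α := ℕ) (· ^^^ ·) := ⟨Nat.xor_comm⟩

lemma xrot (a b c : ℕ) : a ^^^ b ^^^ c = c ^^^ a ^^^ b := by ac_rfl

lemma xswap (a b c : ℕ) : a ^^^ b ^^^ c = a ^^^ c ^^^ b := by ac_rfl

lemma xinj {a b u v : ℕ} (h1 : a ^^^ u ^^^ v = 0) (h2 : b ^^^ u ^^^ v = 0) : a = b := by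
  have h := h1.trans h2.symm
  rwa [Nat.xor_left_inj, Nat.xor_left_inj] at h

lemma xbc (b c : ℕ) : (b ^^^ c) ^^^ b ^^^ c = 0 := by
  have : (b ^^^ c) ^^^ b ^^^ c = (b ^^^ b) ^^^ (c ^^^ c) := by ac_rfl
  simp [this]

lemma xac (a c : ℕ) : a ^^^ (c ^^^ a) ^^^ c = 0 := by
  have : a ^^^ (c ^^^ a) ^^^ c = (a ^^^ a) ^^^ (c ^^^ c) := by ac_rfl
  simp [this]

lemma xab (a b : ℕ) : a ^^^ b ^^^ (a ^^^ b) = 0 := Nat.xor_self _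

lemma xtri (a b c : ℕ) : b ^^^ c ≤ a ∨ c ^^^ a ≤ b ∨ a ^^^ b ≤ c := by
  by_cases h : a ^^^ b ^^^ c = 0
  · left
    rw [Nat.xor_assoc, xor_eq_zero_iff] at h
    exact le_of_eq h.symm
  · rcases Nat.xor_trichotomy h with h | h | h
    exacts [Or.inl h.le, Or.inr (Or.inl h.le), Or.inr (Or.inr h.le)]

-- test omega with min
example (a b : ℕ) (h : min a b = a) : a ≤ b := by omega

lemma xinj2 {a b u v : ℕ} (h1 : u ^^^ a ^^^ v = 0) (h2 : u ^^^ b ^^^ v = 0) : a = b := by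
  rw [Nat.xor_comm u a] at h1; rw [Nat.xor_comm u b] at h2; exact xinj h1 h2

lemma xinj3 {a b u v : ℕ} (h1 : u ^^^ v ^^^ a = 0) (h2 : u ^^^ v ^^^ b = 0) : a = b := by
  rw [xor_eq_zero_iff] at h1 h2; rw [← h1, ← h2]

lemma cyc_iff (n : Fin 6 → ℕ) : cyc 6 (fun x => x 0 + x 2 + x 4 = x 1 + x 3 + x 5 ∧ x 0 ^^^ x 1 ^^^ x 2 = 0 ∧ x 0 ≤ x 3 ∧ x 1 ≤ x 4 ∧ x 2 ≤ x 5) n ↔ Cv n := by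
  constructor
  · rintro ⟨r, h | h⟩ <;>
      have h6 : r % 6 = 0 ∨ r % 6 = 1 ∨ r % 6 = 2 ∨ r % 6 = 3 ∨ r % 6 = 4 ∨ r % 6 = 5 := by omega
    all_goals rcases h6 with hr | hr | hr | hr | hr | hr
    · have e : (fun j : Fin 6 => n ⟨(j.1 + r) % 6, Nat.mod_lt _ (Nat.lt_of_le_of_lt (Nat.zero_le _) j.isLt)⟩) = (fun j : Fin 6 => n ⟨(j.1 + 0) % 6, Nat.mod_lt _ (Nat.lt_of_le_of_lt (Nat.zero_le _) j.isLt)⟩) := by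
        funext j; exact congrArg n (Fin.ext (show (((j : ℕ) + r) % 6 : ℕ) = ((j : ℕ) + 0) % 6 by omega))
      rw [e] at h
      have h' : n 0 + n 2 + n 4 = n 1 + n 3 + n 5 ∧ n 0 ^^^ n 1 ^^^ n 2 = 0 ∧ n 0 ≤ n 3 ∧ n 1 ≤ n 4 ∧ n 2 ≤ n 5 := h
      obtain ⟨hb, hx, h1, h2, h3⟩ := h'
      refine ⟨by omega, ?_⟩
      rw [min_eq_left h1, min_eq_left h2, min_eq_left h3]
      rw [show n 0 ^^^ n 1 ^^^ n 2 = n 0 ^^^ n 1 ^^^ n 2 from by ac_rfl]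
      exact hx
    · have e : (fun j : Fin 6 => n ⟨(j.1 + r) % 6, Nat.mod_lt _ (Nat.lt_of_le_of_lt (Nat.zero_le _) j.isLt)⟩) = (fun j : Fin 6 => n ⟨(j.1 + 1) % 6, Nat.mod_lt _ (Nat.lt_of_le_of_lt (Nat.zero_le _) j.isLt)⟩) := by
        funext j; exact congrArg n (Fin.ext (show (((j : ℕ) + r) % 6 : ℕ) = ((j : ℕ) + 1) % 6 by omega))
      rw [e] at h
      have h' : n 1 + n 3 + n 5 = n 2 + n 4 + n 0 ∧ n 1 ^^^ n 2 ^^^ n 3 = 0 ∧ n 1 ≤ n 4 ∧ n 2 ≤ n 5 ∧ n 3 ≤ n 0 := h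
      obtain ⟨hb, hx, h1, h2, h3⟩ := h'
      refine ⟨by omega, ?_⟩
      rw [min_eq_right h3, min_eq_left h1, min_eq_left h2]
      rw [show n 3 ^^^ n 1 ^^^ n 2 = n 1 ^^^ n 2 ^^^ n 3 from by ac_rfl]
      exact hx
    · have e : (fun j : Fin 6 => n ⟨(j.1 + r) % 6, Nat.mod_lt _ (Nat.lt_of_le_of_lt (Nat.zero_le _) j.isLt)⟩) = (fun j : Fin 6 => n ⟨(j.1 + 2) % 6, Nat.mod_lt _ (Nat.lt_of_le_of_lt (Nat.zero_le _) j.isLt)⟩) := by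
        funext j; exact congrArg n (Fin.ext (show (((j : ℕ) + r) % 6 : ℕ) = ((j : ℕ) + 2) % 6 by omega))
      rw [e] at h
      have h' : n 2 + n 4 + n 0 = n 3 + n 5 + n 1 ∧ n 2 ^^^ n 3 ^^^ n 4 = 0 ∧ n 2 ≤ n 5 ∧ n 3 ≤ n 0 ∧ n 4 ≤ n 1 := h
      obtain ⟨hb, hx, h1, h2, h3⟩ := h'
      refine ⟨by omega, ?_⟩
      rw [min_eq_right h2, min_eq_right h3, min_eq_left h1]
      rw [show n 3 ^^^ n 4 ^^^ n 2 = n 2 ^^^ n 3 ^^^ n 4 from by ac_rfl]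
      exact hx
    · have e : (fun j : Fin 6 => n ⟨(j.1 + r) % 6, Nat.mod_lt _ (Nat.lt_of_le_of_lt (Nat.zero_le _) j.isLt)⟩) = (fun j : Fin 6 => n ⟨(j.1 + 3) % 6, Nat.mod_lt _ (Nat.lt_of_le_of_lt (Nat.zero_le _) j.isLt)⟩) := by
        funext j; exact congrArg n (Fin.ext (show (((j : ℕ) + r) % 6 : ℕ) = ((j : ℕ) + 3) % 6 by omega))
      rw [e] at h
      have h' : n 3 + n 5 + n 1 = n 4 + n 0 + n 2 ∧ n 3 ^^^ n 4 ^^^ n 5 = 0 ∧ n 3 ≤ n 0 ∧ n 4 ≤ n 1 ∧ n 5 ≤ n 2 := h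
      obtain ⟨hb, hx, h1, h2, h3⟩ := h'
      refine ⟨by omega, ?_⟩
      rw [min_eq_right h1, min_eq_right h2, min_eq_right h3]
      rw [show n 3 ^^^ n 4 ^^^ n 5 = n 3 ^^^ n 4 ^^^ n 5 from by ac_rfl]
      exact hx
    · have e : (fun j : Fin 6 => n ⟨(j.1 + r) % 6, Nat.mod_lt _ (Nat.lt_of_le_of_lt (Nat.zero_le _) j.isLt)⟩) = (fun j : Fin 6 => n ⟨(j.1 + 4) % 6, Nat.mod_lt _ (Nat.lt_of_le_of_lt (Nat.zero_le _) j.isLt)⟩) := by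
        funext j; exact congrArg n (Fin.ext (show (((j : ℕ) + r) % 6 : ℕ) = ((j : ℕ) + 4) % 6 by omega))
      rw [e] at h
      have h' : n 4 + n 0 + n 2 = n 5 + n 1 + n 3 ∧ n 4 ^^^ n 5 ^^^ n 0 = 0 ∧ n 4 ≤ n 1 ∧ n 5 ≤ n 2 ∧ n 0 ≤ n 3 := h
      obtain ⟨hb, hx, h1, h2, h3⟩ := h'
      refine ⟨by omega, ?_⟩
      rw [min_eq_left h3, min_eq_right h1, min_eq_right h2]
      rw [show n 0 ^^^ n 4 ^^^ n 5 = n 4 ^^^ n 5 ^^^ n 0 from by ac_rfl]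
      exact hx
    · have e : (fun j : Fin 6 => n ⟨(j.1 + r) % 6, Nat.mod_lt _ (Nat.lt_of_le_of_lt (Nat.zero_le _) j.isLt)⟩) = (fun j : Fin 6 => n ⟨(j.1 + 5) % 6, Nat.mod_lt _ (Nat.lt_of_le_of_lt (Nat.zero_le _) j.isLt)⟩) := by
        funext j; exact congrArg n (Fin.ext (show (((j : ℕ) + r) % 6 : ℕ) = ((j : ℕ) + 5) % 6 by omega))
      rw [e] at h
      have h' : n 5 + n 1 + n 3 = n 0 + n 2 + n 4 ∧ n 5 ^^^ n 0 ^^^ n 1 = 0 ∧ n 5 ≤ n 2 ∧ n 0 ≤ n 3 ∧ n 1 ≤ n 4 := h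
      obtain ⟨hb, hx, h1, h2, h3⟩ := h'
      refine ⟨by omega, ?_⟩
      rw [min_eq_left h2, min_eq_left h3, min_eq_right h1]
      rw [show n 0 ^^^ n 1 ^^^ n 5 = n 5 ^^^ n 0 ^^^ n 1 from by ac_rfl]
      exact hx
    · have e : (fun j : Fin 6 => n ⟨(r + (6 - j.1)) % 6, Nat.mod_lt _ (Nat.lt_of_le_of_lt (Nat.zero_le _) j.isLt)⟩) = (fun j : Fin 6 => n ⟨(0 + (6 - j.1)) % 6, Nat.mod_lt _ (Nat.lt_of_le_of_lt (Nat.zero_le _) j.isLt)⟩) := by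
        funext j; exact congrArg n (Fin.ext (show ((r + (6 - (j : ℕ))) % 6 : ℕ) = (0 + (6 - (j : ℕ))) % 6 by omega))
      rw [e] at h
      have h' : n 0 + n 4 + n 2 = n 5 + n 3 + n 1 ∧ n 0 ^^^ n 5 ^^^ n 4 = 0 ∧ n 0 ≤ n 3 ∧ n 5 ≤ n 2 ∧ n 4 ≤ n 1 := h
      obtain ⟨hb, hx, h1, h2, h3⟩ := h'
      refine ⟨by omega, ?_⟩
      rw [min_eq_left h1, min_eq_right h3, min_eq_right h2]
      rw [show n 0 ^^^ n 4 ^^^ n 5 = n 0 ^^^ n 5 ^^^ n 4 from by ac_rfl]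
      exact hx
    · have e : (fun j : Fin 6 => n ⟨(r + (6 - j.1)) % 6, Nat.mod_lt _ (Nat.lt_of_le_of_lt (Nat.zero_le _) j.isLt)⟩) = (fun j : Fin 6 => n ⟨(1 + (6 - j.1)) % 6, Nat.mod_lt _ (Nat.lt_of_le_of_lt (Nat.zero_le _) j.isLt)⟩) := by
        funext j; exact congrArg n (Fin.ext (show ((r + (6 - (j : ℕ))) % 6 : ℕ) = (1 + (6 - (j : ℕ))) % 6 by omega))
      rw [e] at h
      have h' : n 1 + n 5 + n 3 = n 0 + n 4 + n 2 ∧ n 1 ^^^ n 0 ^^^ n 5 = 0 ∧ n 1 ≤ n 4 ∧ n 0 ≤ n 3 ∧ n 5 ≤ n 2 := h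
      obtain ⟨hb, hx, h1, h2, h3⟩ := h'
      refine ⟨by omega, ?_⟩
      rw [min_eq_left h2, min_eq_left h1, min_eq_right h3]
      rw [show n 0 ^^^ n 1 ^^^ n 5 = n 1 ^^^ n 0 ^^^ n 5 from by ac_rfl]
      exact hx
    · have e : (fun j : Fin 6 => n ⟨(r + (6 - j.1)) % 6, Nat.mod_lt _ (Nat.lt_of_le_of_lt (Nat.zero_le _) j.isLt)⟩) = (fun j : Fin 6 => n ⟨(2 + (6 - j.1)) % 6, Nat.mod_lt _ (Nat.lt_of_le_of_lt (Nat.zero_le _) j.isLt)⟩) := by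
        funext j; exact congrArg n (Fin.ext (show ((r + (6 - (j : ℕ))) % 6 : ℕ) = (2 + (6 - (j : ℕ))) % 6 by omega))
      rw [e] at h
      have h' : n 2 + n 0 + n 4 = n 1 + n 5 + n 3 ∧ n 2 ^^^ n 1 ^^^ n 0 = 0 ∧ n 2 ≤ n 5 ∧ n 1 ≤ n 4 ∧ n 0 ≤ n 3 := h
      obtain ⟨hb, hx, h1, h2, h3⟩ := h'
      refine ⟨by omega, ?_⟩
      rw [min_eq_left h3, min_eq_left h2, min_eq_left h1]
      rw [show n 0 ^^^ n 1 ^^^ n 2 = n 2 ^^^ n 1 ^^^ n 0 from by ac_rfl]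
      exact hx
    · have e : (fun j : Fin 6 => n ⟨(r + (6 - j.1)) % 6, Nat.mod_lt _ (Nat.lt_of_le_of_lt (Nat.zero_le _) j.isLt)⟩) = (fun j : Fin 6 => n ⟨(3 + (6 - j.1)) % 6, Nat.mod_lt _ (Nat.lt_of_le_of_lt (Nat.zero_le _) j.isLt)⟩) := by
        funext j; exact congrArg n (Fin.ext (show ((r + (6 - (j : ℕ))) % 6 : ℕ) = (3 + (6 - (j : ℕ))) % 6 by omega))
      rw [e] at h
      have h' : n 3 + n 1 + n 5 = n 2 + n 0 + n 4 ∧ n 3 ^^^ n 2 ^^^ n 1 = 0 ∧ n 3 ≤ n 0 ∧ n 2 ≤ n 5 ∧ n 1 ≤ n 4 := h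
      obtain ⟨hb, hx, h1, h2, h3⟩ := h'
      refine ⟨by omega, ?_⟩
      rw [min_eq_right h1, min_eq_left h3, min_eq_left h2]
      rw [show n 3 ^^^ n 1 ^^^ n 2 = n 3 ^^^ n 2 ^^^ n 1 from by ac_rfl]
      exact hx
    · have e : (fun j : Fin 6 => n ⟨(r + (6 - j.1)) % 6, Nat.mod_lt _ (Nat.lt_of_le_of_lt (Nat.zero_le _) j.isLt)⟩) = (fun j : Fin 6 => n ⟨(4 + (6 - j.1)) % 6, Nat.mod_lt _ (Nat.lt_of_le_of_lt (Nat.zero_le _) j.isLt)⟩) := by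
        funext j; exact congrArg n (Fin.ext (show ((r + (6 - (j : ℕ))) % 6 : ℕ) = (4 + (6 - (j : ℕ))) % 6 by omega))
      rw [e] at h
      have h' : n 4 + n 2 + n 0 = n 3 + n 1 + n 5 ∧ n 4 ^^^ n 3 ^^^ n 2 = 0 ∧ n 4 ≤ n 1 ∧ n 3 ≤ n 0 ∧ n 2 ≤ n 5 := h
      obtain ⟨hb, hx, h1, h2, h3⟩ := h'
      refine ⟨by omega, ?_⟩
      rw [min_eq_right h2, min_eq_right h1, min_eq_left h3]
      rw [show n 3 ^^^ n 4 ^^^ n 2 = n 4 ^^^ n 3 ^^^ n 2 from by ac_rfl]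
      exact hx
    · have e : (fun j : Fin 6 => n ⟨(r + (6 - j.1)) % 6, Nat.mod_lt _ (Nat.lt_of_le_of_lt (Nat.zero_le _) j.isLt)⟩) = (fun j : Fin 6 => n ⟨(5 + (6 - j.1)) % 6, Nat.mod_lt _ (Nat.lt_of_le_of_lt (Nat.zero_le _) j.isLt)⟩) := by
        funext j; exact congrArg n (Fin.ext (show ((r + (6 - (j : ℕ))) % 6 : ℕ) = (5 + (6 - (j : ℕ))) % 6 by omega))
      rw [e] at h
      have h' : n 5 + n 3 + n 1 = n 4 + n 2 + n 0 ∧ n 5 ^^^ n 4 ^^^ n 3 = 0 ∧ n 5 ≤ n 2 ∧ n 4 ≤ n 1 ∧ n 3 ≤ n 0 := h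
      obtain ⟨hb, hx, h1, h2, h3⟩ := h'
      refine ⟨by omega, ?_⟩
      rw [min_eq_right h3, min_eq_right h2, min_eq_right h1]
      rw [show n 3 ^^^ n 4 ^^^ n 5 = n 5 ^^^ n 4 ^^^ n 3 from by ac_rfl]
      exact hx
  · rintro ⟨hb, hx⟩
    rcases le_total (n 0) (n 3) with h0 | h0 <;> rcases le_total (n 2) (n 5) with h2 | h2
    · have h1 : n 1 ≤ n 4 := by omega
      rw [min_eq_left h0, min_eq_left h1, min_eq_left h2] at hx
      have hQ : n 0 + n 2 + n 4 = n 1 + n 3 + n 5 ∧ n 0 ^^^ n 1 ^^^ n 2 = 0 ∧ n 0 ≤ n 3 ∧ n 1 ≤ n 4 ∧ n 2 ≤ n 5 :=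
        ⟨by omega, by rw [show n 0 ^^^ n 1 ^^^ n 2 = n 0 ^^^ n 1 ^^^ n 2 from by ac_rfl]; exact hx, by omega, by omega, by omega⟩
      exact ⟨0, Or.inl hQ⟩
    · rcases le_total (n 1) (n 4) with h1 | h1
      ·
        rw [min_eq_left h0, min_eq_left h1, min_eq_right h2] at hx
        have hQ : n 5 + n 1 + n 3 = n 0 + n 2 + n 4 ∧ n 5 ^^^ n 0 ^^^ n 1 = 0 ∧ n 5 ≤ n 2 ∧ n 0 ≤ n 3 ∧ n 1 ≤ n 4 :=
          ⟨by omega, by rw [show n 5 ^^^ n 0 ^^^ n 1 = n 0 ^^^ n 1 ^^^ n 5 from by ac_rfl]; exact hx, by omega, by omega, by omega⟩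
        exact ⟨5, Or.inl hQ⟩
      ·
        rw [min_eq_left h0, min_eq_right h1, min_eq_right h2] at hx
        have hQ : n 4 + n 0 + n 2 = n 5 + n 1 + n 3 ∧ n 4 ^^^ n 5 ^^^ n 0 = 0 ∧ n 4 ≤ n 1 ∧ n 5 ≤ n 2 ∧ n 0 ≤ n 3 :=
          ⟨by omega, by rw [show n 4 ^^^ n 5 ^^^ n 0 = n 0 ^^^ n 4 ^^^ n 5 from by ac_rfl]; exact hx, by omega, by omega, by omega⟩
        exact ⟨4, Or.inl hQ⟩
    · rcases le_total (n 1) (n 4) with h1 | h1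
      ·
        rw [min_eq_right h0, min_eq_left h1, min_eq_left h2] at hx
        have hQ : n 1 + n 3 + n 5 = n 2 + n 4 + n 0 ∧ n 1 ^^^ n 2 ^^^ n 3 = 0 ∧ n 1 ≤ n 4 ∧ n 2 ≤ n 5 ∧ n 3 ≤ n 0 :=
          ⟨by omega, by rw [show n 1 ^^^ n 2 ^^^ n 3 = n 3 ^^^ n 1 ^^^ n 2 from by ac_rfl]; exact hx, by omega, by omega, by omega⟩
        exact ⟨1, Or.inl hQ⟩
      ·
        rw [min_eq_right h0, min_eq_right h1, min_eq_left h2] at hx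
        have hQ : n 2 + n 4 + n 0 = n 3 + n 5 + n 1 ∧ n 2 ^^^ n 3 ^^^ n 4 = 0 ∧ n 2 ≤ n 5 ∧ n 3 ≤ n 0 ∧ n 4 ≤ n 1 :=
          ⟨by omega, by rw [show n 2 ^^^ n 3 ^^^ n 4 = n 3 ^^^ n 4 ^^^ n 2 from by ac_rfl]; exact hx, by omega, by omega, by omega⟩
        exact ⟨2, Or.inl hQ⟩
    · have h1 : n 4 ≤ n 1 := by omega
      rw [min_eq_right h0, min_eq_right h1, min_eq_right h2] at hx
      have hQ : n 3 + n 5 + n 1 = n 4 + n 0 + n 2 ∧ n 3 ^^^ n 4 ^^^ n 5 = 0 ∧ n 3 ≤ n 0 ∧ n 4 ≤ n 1 ∧ n 5 ≤ n 2 :=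
        ⟨by omega, by rw [show n 3 ^^^ n 4 ^^^ n 5 = n 3 ^^^ n 4 ^^^ n 5 from by ac_rfl]; exact hx, by omega, by omega, by omega⟩
      exact ⟨3, Or.inl hQ⟩

lemma move_iff (x y : Fin 6 → ℕ) :
    ecnMove 6 {2, 3} 3 x y ↔ y ≠ x ∧ (∀ j, y j ≤ x j) ∧
      ((y 1 = x 1 ∧ y 3 = x 3 ∧ y 5 = x 5) ∨
       (y 0 = x 0 ∧ y 2 = x 2 ∧ y 4 = x 4) ∨
       (y 1 = x 1 ∧ y 2 = x 2 ∧ y 4 = x 4 ∧ y 5 = x 5) ∨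
       (y 0 = x 0 ∧ y 2 = x 2 ∧ y 3 = x 3 ∧ y 5 = x 5) ∨
       (y 0 = x 0 ∧ y 1 = x 1 ∧ y 3 = x 3 ∧ y 4 = x 4)) := by
  constructor
  · rintro ⟨hne, hle, s, hs, i, hsup⟩
    refine ⟨hne, hle, ?_⟩
    simp only [Set.mem_insert_iff, Set.mem_singleton_iff] at hs
    have key : ∀ j : Fin 6, (∀ t, t < 3 → ((j : ℕ) ≠ (i + t * s) % 6)) → y j = x j := by
      intro j hj
      by_contra h
      obtain ⟨t, ht, he⟩ := hsup j h
      exact hj t ht he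
    rcases hs with rfl | rfl
    · rcases Nat.even_or_odd i with hi | hi
      · obtain ⟨w, hw⟩ := hi
        exact Or.inl ⟨key 1 (by intro t ht; show (1:ℕ) ≠ _; omega),
          key 3 (by intro t ht; show (3:ℕ) ≠ _; omega),
          key 5 (by intro t ht; show (5:ℕ) ≠ _; omega)⟩
      · obtain ⟨w, hw⟩ := hi
        exact Or.inr (Or.inl ⟨key 0 (by intro t ht; show (0:ℕ) ≠ _; omega),
          key 2 (by intro t ht; show (2:ℕ) ≠ _; omega),
          key 4 (by intro t ht; show (4:ℕ) ≠ _; omega)⟩)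
    · have h3 : i % 3 = 0 ∨ i % 3 = 1 ∨ i % 3 = 2 := by omega
      rcases h3 with hi | hi | hi
      · exact Or.inr (Or.inr (Or.inl ⟨key 1 (by intro t ht; show (1:ℕ) ≠ _; omega),
          key 2 (by intro t ht; show (2:ℕ) ≠ _; omega),
          key 4 (by intro t ht; show (4:ℕ) ≠ _; omega),
          key 5 (by intro t ht; show (5:ℕ) ≠ _; omega)⟩))
      · exact Or.inr (Or.inr (Or.inr (Or.inl ⟨key 0 (by intro t ht; show (0:ℕ) ≠ _; omega),
          key 2 (by intro t ht; show (2:ℕ) ≠ _; omega),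
          key 3 (by intro t ht; show (3:ℕ) ≠ _; omega),
          key 5 (by intro t ht; show (5:ℕ) ≠ _; omega)⟩)))
      · exact Or.inr (Or.inr (Or.inr (Or.inr ⟨key 0 (by intro t ht; show (0:ℕ) ≠ _; omega),
          key 1 (by intro t ht; show (1:ℕ) ≠ _; omega),
          key 3 (by intro t ht; show (3:ℕ) ≠ _; omega),
          key 4 (by intro t ht; show (4:ℕ) ≠ _; omega)⟩)))
  · rintro ⟨hne, hle, hc⟩
    refine ⟨hne, hle, ?_⟩
    rcases hc with ⟨h1, h2, h3⟩ | ⟨h1, h2, h3⟩ | ⟨h1, h2, h3, h4⟩ | ⟨h1, h2, h3, h4⟩ | ⟨h1, h2, h3, h4⟩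
    · exact ⟨2, Or.inl rfl, 0, by
        intro j hj; fin_cases j
        · exact ⟨0, by omega, by norm_num⟩
        · exact absurd h1 hj
        · exact ⟨1, by omega, by norm_num⟩
        · exact absurd h2 hj
        · exact ⟨2, by omega, by norm_num⟩
        · exact absurd h3 hj⟩
    · exact ⟨2, Or.inl rfl, 1, by
        intro j hj; fin_cases j
        · exact absurd h1 hj
        · exact ⟨0, by omega, by norm_num⟩
        · exact absurd h2 hj
        · exact ⟨1, by omega, by norm_num⟩
        · exact absurd h3 hj
        · exact ⟨2, by omega, by norm_num⟩⟩
    · exact ⟨3, Or.inr rfl, 0, by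
        intro j hj; fin_cases j
        · exact ⟨0, by omega, by norm_num⟩
        · exact absurd h1 hj
        · exact absurd h2 hj
        · exact ⟨1, by omega, by norm_num⟩
        · exact absurd h3 hj
        · exact absurd h4 hj⟩
    · exact ⟨3, Or.inr rfl, 1, by
        intro j hj; fin_cases j
        · exact absurd h1 hj
        · exact ⟨0, by omega, by norm_num⟩
        · exact absurd h2 hj
        · exact absurd h3 hj
        · exact ⟨1, by omega, by norm_num⟩
        · exact absurd h4 hj⟩
    · exact ⟨3, Or.inr rfl, 2, by
        intro j hj; fin_cases j
        · exact absurd h1 hj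
        · exact absurd h2 hj
        · exact ⟨0, by omega, by norm_num⟩
        · exact absurd h3 hj
        · exact absurd h4 hj
        · exact ⟨1, by omega, by norm_num⟩⟩

lemma ne6 {x y : Fin 6 → ℕ} (h : y ≠ x) :
    ¬(y 0 = x 0 ∧ y 1 = x 1 ∧ y 2 = x 2 ∧ y 3 = x 3 ∧ y 4 = x 4 ∧ y 5 = x 5) := by
  rintro ⟨h0, h1, h2, h3, h4, h5⟩
  apply h; funext j; fin_cases j <;> assumption

lemma key1 (x y : Fin 6 → ℕ) (hC : Cv x) (hne : y ≠ x) (hle : ∀ j, y j ≤ x j)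
    (hsup : (y 1 = x 1 ∧ y 3 = x 3 ∧ y 5 = x 5) ∨
       (y 0 = x 0 ∧ y 2 = x 2 ∧ y 4 = x 4) ∨
       (y 1 = x 1 ∧ y 2 = x 2 ∧ y 4 = x 4 ∧ y 5 = x 5) ∨
       (y 0 = x 0 ∧ y 2 = x 2 ∧ y 3 = x 3 ∧ y 5 = x 5) ∨
       (y 0 = x 0 ∧ y 1 = x 1 ∧ y 3 = x 3 ∧ y 4 = x 4)) : ¬ Cv y := by
  rintro ⟨hby, hxy⟩
  obtain ⟨hbx, hxx⟩ := hC
  have l0 := hle 0; have l1 := hle 1; have l2 := hle 2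
  have l3 := hle 3; have l4 := hle 4; have l5 := hle 5
  have hne' := ne6 hne
  rcases hsup with ⟨h1, h2, h3⟩ | ⟨h1, h2, h3⟩ | ⟨h1, h2, h3, h4⟩ | ⟨h1, h2, h3, h4⟩ | ⟨h1, h2, h3, h4⟩
  · -- E move: even sum strictly decreases unless all equal
    exact hne' ⟨by omega, h1, by omega, h2, by omega, h3⟩
  · exact hne' ⟨h1, by omega, h2, by omega, h3, by omega⟩
  · -- pair {0,3}
    have hd : y 0 + x 3 = x 0 + y 3 := by omega
    have h03 : y 0 < x 0 := by
      rcases lt_or_eq_of_le l0 with h | h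
      · exact h
      · exact (hne' ⟨h, h1, h2, by omega, h3, h4⟩).elim
    rw [h1, h2, h3, h4] at hxy
    have := xinj hxy hxx
    omega
  · -- pair {1,4}
    have hd : y 1 + x 4 = x 1 + y 4 := by omega
    have h14 : y 1 < x 1 := by
      rcases lt_or_eq_of_le l1 with h | h
      · exact h
      · exact (hne' ⟨h1, h, h2, h3, by omega, h4⟩).elim
    rw [h1, h2, h3, h4] at hxy
    have := xinj2 hxy hxx
    omega
  · -- pair {2,5}
    have hd : y 2 + x 5 = x 2 + y 5 := by omega
    have h25 : y 2 < x 2 := by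
      rcases lt_or_eq_of_le l2 with h | h
      · exact h
      · exact (hne' ⟨h1, h2, h, h3, h4, by omega⟩).elim
    rw [h1, h2, h3, h4] at hxy
    have := xinj3 hxy hxx
    omega

lemma key2 (x : Fin 6 → ℕ) (h : ¬ Cv x) :
    ∃ y : Fin 6 → ℕ, (y ≠ x ∧ (∀ j, y j ≤ x j) ∧
      ((y 1 = x 1 ∧ y 3 = x 3 ∧ y 5 = x 5) ∨
       (y 0 = x 0 ∧ y 2 = x 2 ∧ y 4 = x 4) ∨
       (y 1 = x 1 ∧ y 2 = x 2 ∧ y 4 = x 4 ∧ y 5 = x 5) ∨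
       (y 0 = x 0 ∧ y 2 = x 2 ∧ y 3 = x 3 ∧ y 5 = x 5) ∨
       (y 0 = x 0 ∧ y 1 = x 1 ∧ y 3 = x 3 ∧ y 4 = x 4))) ∧ Cv y := by
  by_cases hb : x 0 + x 2 + x 4 = x 1 + x 3 + x 5
  · have hxx : ¬(min (x 0) (x 3) ^^^ min (x 1) (x 4) ^^^ min (x 2) (x 5) = 0) := fun hh => h ⟨hb, hh⟩
    rcases Nat.xor_trichotomy hxx with hk | hk | hk
    ·
      obtain ⟨v0, v3, hA1, hA2, hA3, hA4, hA5⟩ : ∃ v0 v3 : ℕ, (v0 ≤ x 0) ∧ (v3 ≤ x 3) ∧ (v0 < x 0) ∧ ((v0) + (x 2) + (x 4) = (x 1) + (v3) + (x 5)) ∧ (min v0 v3 = (min (x 1) (x 4) ^^^ min (x 2) (x 5))) := ⟨(x 0 - (min (x 0) (x 3) - (min (x 1) (x 4) ^^^ min (x 2) (x 5)))), (x 3 - (min (x 0) (x 3) - (min (x 1) (x 4) ^^^ min (x 2) (x 5)))), by omega, by omega, by omega, by omega, by omega⟩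
      refine ⟨![v0, x 1, x 2, v3, x 4, x 5], ⟨?_, ?_, ?_⟩, ?_⟩
      · intro heq
        have q0 : (v0) = x 0 := congrFun heq 0
        omega
      · intro j; fin_cases j
        · show (v0) ≤ x 0; omega
        · show (x 1) ≤ x 1; omega
        · show (x 2) ≤ x 2; omega
        · show (v3) ≤ x 3; omega
        · show (x 4) ≤ x 4; omega
        · show (x 5) ≤ x 5; omega
      · exact Or.inr (Or.inr (Or.inl ⟨rfl, rfl, rfl, rfl⟩))
      · show ((v0) + (x 2) + (x 4) = (x 1) + (v3) + (x 5)) ∧ (min (v0) (v3) ^^^ min (x 1) (x 4) ^^^ min (x 2) (x 5) = 0)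
        refine ⟨by omega, ?_⟩
        rw [hA5]
        exact xbc (min (x 1) (x 4)) (min (x 2) (x 5))
    ·
      obtain ⟨v1, v4, hA1, hA2, hA3, hA4, hA5⟩ : ∃ v1 v4 : ℕ, (v1 ≤ x 1) ∧ (v4 ≤ x 4) ∧ (v1 < x 1) ∧ ((x 0) + (x 2) + (v4) = (v1) + (x 3) + (x 5)) ∧ (min v1 v4 = (min (x 2) (x 5) ^^^ min (x 0) (x 3))) := ⟨(x 1 - (min (x 1) (x 4) - (min (x 2) (x 5) ^^^ min (x 0) (x 3)))), (x 4 - (min (x 1) (x 4) - (min (x 2) (x 5) ^^^ min (x 0) (x 3)))), by omega, by omega, by omega, by omega, by omega⟩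
      refine ⟨![x 0, v1, x 2, x 3, v4, x 5], ⟨?_, ?_, ?_⟩, ?_⟩
      · intro heq
        have q1 : (v1) = x 1 := congrFun heq 1
        omega
      · intro j; fin_cases j
        · show (x 0) ≤ x 0; omega
        · show (v1) ≤ x 1; omega
        · show (x 2) ≤ x 2; omega
        · show (x 3) ≤ x 3; omega
        · show (v4) ≤ x 4; omega
        · show (x 5) ≤ x 5; omega
      · exact Or.inr (Or.inr (Or.inr (Or.inl ⟨rfl, rfl, rfl, rfl⟩)))
      · show ((x 0) + (x 2) + (v4) = (v1) + (x 3) + (x 5)) ∧ (min (x 0) (x 3) ^^^ min (v1) (v4) ^^^ min (x 2) (x 5) = 0)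
        refine ⟨by omega, ?_⟩
        rw [hA5]
        exact xac (min (x 0) (x 3)) (min (x 2) (x 5))
    ·
      obtain ⟨v2, v5, hA1, hA2, hA3, hA4, hA5⟩ : ∃ v2 v5 : ℕ, (v2 ≤ x 2) ∧ (v5 ≤ x 5) ∧ (v2 < x 2) ∧ ((x 0) + (v2) + (x 4) = (x 1) + (x 3) + (v5)) ∧ (min v2 v5 = (min (x 0) (x 3) ^^^ min (x 1) (x 4))) := ⟨(x 2 - (min (x 2) (x 5) - (min (x 0) (x 3) ^^^ min (x 1) (x 4)))), (x 5 - (min (x 2) (x 5) - (min (x 0) (x 3) ^^^ min (x 1) (x 4)))), by omega, by omega, by omega, by omega, by omega⟩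
      refine ⟨![x 0, x 1, v2, x 3, x 4, v5], ⟨?_, ?_, ?_⟩, ?_⟩
      · intro heq
        have q2 : (v2) = x 2 := congrFun heq 2
        omega
      · intro j; fin_cases j
        · show (x 0) ≤ x 0; omega
        · show (x 1) ≤ x 1; omega
        · show (v2) ≤ x 2; omega
        · show (x 3) ≤ x 3; omega
        · show (x 4) ≤ x 4; omega
        · show (v5) ≤ x 5; omega
      · exact Or.inr (Or.inr (Or.inr (Or.inr (⟨rfl, rfl, rfl, rfl⟩))))
      · show ((x 0) + (v2) + (x 4) = (x 1) + (x 3) + (v5)) ∧ (min (x 0) (x 3) ^^^ min (x 1) (x 4) ^^^ min (v2) (v5) = 0)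
        refine ⟨by omega, ?_⟩
        rw [hA5]
        exact xab (min (x 0) (x 3)) (min (x 1) (x 4))
  · have hbb : x 1 + x 3 + x 5 < x 0 + x 2 + x 4 ∨ x 0 + x 2 + x 4 < x 1 + x 3 + x 5 := by omega
    rcases hbb with hbe | hbo
    · rcases xtri (min (x 0) (x 3)) (min (x 1) (x 4)) (min (x 2) (x 5)) with hk | hk | hk
      · by_cases hA : (min (x 1) (x 4) ^^^ min (x 2) (x 5)) + ((x 0 + x 2 + x 4) - (x 1 + x 3 + x 5)) ≤ x 0
        ·
          obtain ⟨v0, v3, hA1, hA2, hA3, hA4, hA5⟩ : ∃ v0 v3 : ℕ, (v0 ≤ x 0) ∧ (v3 ≤ x 3) ∧ (v0 < x 0) ∧ ((v0) + (x 2) + (x 4) = (x 1) + (v3) + (x 5)) ∧ (min (v0) (v3) = (min (x 1) (x 4) ^^^ min (x 2) (x 5))) := ⟨((min (x 1) (x 4) ^^^ min (x 2) (x 5)) + ((x 0 - ((x 0 + x 2 + x 4) - (x 1 + x 3 + x 5))) - x 3)), ((min (x 1) (x 4) ^^^ min (x 2) (x 5)) + (x 3 - (x 0 - ((x 0 + x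 2 + x 4) - (x 1 + x 3 + x 5))))), by omega, by omega, by omega, by omega, by omega⟩
          refine ⟨![v0, x 1, x 2, v3, x 4, x 5], ⟨?_, ?_, ?_⟩, ?_⟩
          · intro heq
            have q0 : (v0) = x 0 := congrFun heq 0
            omega
          · intro j; fin_cases j
            · show (v0) ≤ x 0; omega
            · show (x 1) ≤ x 1; omega
            · show (x 2) ≤ x 2; omega
            · show (v3) ≤ x 3; omega
            · show (x 4) ≤ x 4; omega
            · show (x 5) ≤ x 5; omega
          · exact Or.inr (Or.inr (Or.inl ⟨rfl, rfl, rfl, rfl⟩))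
          · show ((v0) + (x 2) + (x 4) = (x 1) + (v3) + (x 5)) ∧ (min (v0) (v3) ^^^ min (x 1) (x 4) ^^^ min (x 2) (x 5) = 0)
            refine ⟨by omega, ?_⟩
            rw [hA5]
            exact xbc (min (x 1) (x 4)) (min (x 2) (x 5))
        ·
          obtain ⟨v4, v2, hB1, hB2, hB3, hB4, hB5, hB6⟩ : ∃ v4 v2 : ℕ, (v4 ≤ x 4) ∧ (v2 ≤ x 2) ∧ (((min (x 1) (x 4) ^^^ min (x 2) (x 5))) + (v2) + (v4) = (x 1) + (x 3) + (x 5)) ∧ (min (x 1) (v4) = min (x 1) (x 4)) ∧ (min (v2) (x 5) = min (x 2) (x 5)) ∧ (min ((min (x 1) (x 4) ^^^ min (x 2) (x 5))) (x 3) = (min (x 1) (x 4) ^^^ min (x 2) (x 5))) := ⟨(x 4 - (min (((x 0 + x 2 + x 4) - (x 1 + x 3 + x 5)) - (x 0 - (min (x 1) (x 4) ^^^ min (x 2) (x 5)))) (x 4 - min (x 1) (x 4)))), (x 2 - ((((x 0 + x 2 + x 4) - (x 1 + x 3 + x 5)) - (x 0 - (min (x 1) (x 4) ^^^ min (x 2)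 (x 5)))) - (min (((x 0 + x 2 + x 4) - (x 1 + x 3 + x 5)) - (x 0 - (min (x 1) (x 4) ^^^ min (x 2) (x 5)))) (x 4 - min (x 1) (x 4))))), by omega, by omega, by omega, by omega, by omega, by omega⟩
          refine ⟨![(min (x 1) (x 4) ^^^ min (x 2) (x 5)), x 1, v2, x 3, v4, x 5], ⟨?_, ?_, ?_⟩, ?_⟩
          · intro heq
            have q0 : ((min (x 1) (x 4) ^^^ min (x 2) (x 5))) = x 0 := congrFun heq 0
            have q4 : (v4) = x 4 := congrFun heq 4
            have q2 : (v2) = x 2 := congrFun heq 2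
            omega
          · intro j; fin_cases j
            · show ((min (x 1) (x 4) ^^^ min (x 2) (x 5))) ≤ x 0; omega
            · show (x 1) ≤ x 1; omega
            · show (v2) ≤ x 2; omega
            · show (x 3) ≤ x 3; omega
            · show (v4) ≤ x 4; omega
            · show (x 5) ≤ x 5; omega
          · exact Or.inl ⟨rfl, rfl, rfl⟩
          · show (((min (x 1) (x 4) ^^^ min (x 2) (x 5))) + (v2) + (v4) = (x 1) + (x 3) + (x 5)) ∧ (min ((min (x 1) (x 4) ^^^ min (x 2) (x 5))) (x 3) ^^^ min (x 1) (v4) ^^^ min (v2) (x 5) = 0)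
            refine ⟨by omega, ?_⟩
            rw [hB6, hB4, hB5]
            exact xbc (min (x 1) (x 4)) (min (x 2) (x 5))
      · by_cases hA : (min (x 2) (x 5) ^^^ min (x 0) (x 3)) + ((x 0 + x 2 + x 4) - (x 1 + x 3 + x 5)) ≤ x 4
        ·
          obtain ⟨v4, v1, hA1, hA2, hA3, hA4, hA5⟩ : ∃ v4 v1 : ℕ, (v4 ≤ x 4) ∧ (v1 ≤ x 1) ∧ (v4 < x 4) ∧ ((x 0) + (x 2) + (v4) = (v1) + (x 3) + (x 5)) ∧ (min (v1) (v4) = (min (x 2) (x 5) ^^^ min (x 0) (x 3))) := ⟨((min (x 2) (x 5) ^^^ min (x 0) (x 3)) + ((x 4 - ((x 0 + x 2 + x 4) - (x 1 + x 3 + x 5))) - x 1)), ((min (x 2) (x 5) ^^^ min (x 0) (x 3)) + (x 1 - (x 4 - ((x 0 + x 2 + x 4) - (x 1 + x 3 + x 5))))), by omega, by omega, by omega, by omega, by omega⟩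
          refine ⟨![x 0, v1, x 2, x 3, v4, x 5], ⟨?_, ?_, ?_⟩, ?_⟩
          · intro heq
            have q4 : (v4) = x 4 := congrFun heq 4
            omega
          · intro j; fin_cases j
            · show (x 0) ≤ x 0; omega
            · show (v1) ≤ x 1; omega
            · show (x 2) ≤ x 2; omega
            · show (x 3) ≤ x 3; omega
            · show (v4) ≤ x 4; omega
            · show (x 5) ≤ x 5; omega
          · exact Or.inr (Or.inr (Or.inr (Or.inl ⟨rfl, rfl, rfl, rfl⟩)))
          · show ((x 0) + (x 2) + (v4) = (v1) + (x 3) + (x 5)) ∧ (min (x 0) (x 3) ^^^ min (v1) (v4) ^^^ min (x 2) (x 5) = 0)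
            refine ⟨by omega, ?_⟩
            rw [hA5]
            exact xac (min (x 0) (x 3)) (min (x 2) (x 5))
        ·
          obtain ⟨v0, v2, hB1, hB2, hB3, hB4, hB5, hB6⟩ : ∃ v0 v2 : ℕ, (v0 ≤ x 0) ∧ (v2 ≤ x 2) ∧ ((v0) + (v2) + ((min (x 2) (x 5) ^^^ min (x 0) (x 3))) = (x 1) + (x 3) + (x 5)) ∧ (min (v0) (x 3) = min (x 0) (x 3)) ∧ (min (v2) (x 5) = min (x 2) (x 5)) ∧ (min (x 1) ((min (x 2) (x 5) ^^^ min (x 0) (x 3))) = (min (x 2) (x 5) ^^^ min (x 0) (x 3))) := ⟨(x 0 - (min (((x 0 + x 2 + x 4) - (x 1 + x 3 + x 5)) - (x 4 - (min (x 2) (x 5) ^^^ min (x 0) (x 3)))) (x 0 - min (x 0) (x 3)))), (x 2 - ((((x 0 + x 2 + x 4) - (x 1 + x 3 + x 5)) - (x 4 - (min (x 2) (x 5) ^^^ min (x 0) (x 3)))) - (min (((x 0 + x 2 + x 4) - (x 1 + x 3 + x 5)) - (x 4 - (min (x 2) (x 5) ^^^ min (x 0) (x 3)))) (x 0 - min (x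 0) (x 3))))), by omega, by omega, by omega, by omega, by omega, by omega⟩
          refine ⟨![v0, x 1, v2, x 3, (min (x 2) (x 5) ^^^ min (x 0) (x 3)), x 5], ⟨?_, ?_, ?_⟩, ?_⟩
          · intro heq
            have q4 : ((min (x 2) (x 5) ^^^ min (x 0) (x 3))) = x 4 := congrFun heq 4
            have q0 : (v0) = x 0 := congrFun heq 0
            have q2 : (v2) = x 2 := congrFun heq 2
            omega
          · intro j; fin_cases j
            · show (v0) ≤ x 0; omega
            · show (x 1) ≤ x 1; omega
            · show (v2) ≤ x 2; omega
            · show (x 3) ≤ x 3; omega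
            · show ((min (x 2) (x 5) ^^^ min (x 0) (x 3))) ≤ x 4; omega
            · show (x 5) ≤ x 5; omega
          · exact Or.inl ⟨rfl, rfl, rfl⟩
          · show ((v0) + (v2) + ((min (x 2) (x 5) ^^^ min (x 0) (x 3))) = (x 1) + (x 3) + (x 5)) ∧ (min (v0) (x 3) ^^^ min (x 1) ((min (x 2) (x 5) ^^^ min (x 0) (x 3))) ^^^ min (v2) (x 5) = 0)
            refine ⟨by omega, ?_⟩
            rw [hB6, hB4, hB5]
            exact xac (min (x 0) (x 3)) (min (x 2) (x 5))
      · by_cases hA : (min (x 0) (x 3) ^^^ min (x 1) (x 4)) + ((x 0 + x 2 + x 4) - (x 1 + x 3 + x 5)) ≤ x 2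
        ·
          obtain ⟨v2, v5, hA1, hA2, hA3, hA4, hA5⟩ : ∃ v2 v5 : ℕ, (v2 ≤ x 2) ∧ (v5 ≤ x 5) ∧ (v2 < x 2) ∧ ((x 0) + (v2) + (x 4) = (x 1) + (x 3) + (v5)) ∧ (min (v2) (v5) = (min (x 0) (x 3) ^^^ min (x 1) (x 4))) := ⟨((min (x 0) (x 3) ^^^ min (x 1) (x 4)) + ((x 2 - ((x 0 + x 2 + x 4) - (x 1 + x 3 + x 5))) - x 5)), ((min (x 0) (x 3) ^^^ min (x 1) (x 4)) + (x 5 - (x 2 - ((x 0 + x 2 + x 4) - (x 1 + x 3 + x 5))))), by omega, by omega, by omega, by omega, by omega⟩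
          refine ⟨![x 0, x 1, v2, x 3, x 4, v5], ⟨?_, ?_, ?_⟩, ?_⟩
          · intro heq
            have q2 : (v2) = x 2 := congrFun heq 2
            omega
          · intro j; fin_cases j
            · show (x 0) ≤ x 0; omega
            · show (x 1) ≤ x 1; omega
            · show (v2) ≤ x 2; omega
            · show (x 3) ≤ x 3; omega
            · show (x 4) ≤ x 4; omega
            · show (v5) ≤ x 5; omega
          · exact Or.inr (Or.inr (Or.inr (Or.inr (⟨rfl, rfl, rfl, rfl⟩))))
          · show ((x 0) + (v2) + (x 4) = (x 1) + (x 3) + (v5)) ∧ (min (x 0) (x 3) ^^^ min (x 1) (x 4) ^^^ min (v2) (v5) = 0)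
            refine ⟨by omega, ?_⟩
            rw [hA5]
            exact xab (min (x 0) (x 3)) (min (x 1) (x 4))
        ·
          obtain ⟨v0, v4, hB1, hB2, hB3, hB4, hB5, hB6⟩ : ∃ v0 v4 : ℕ, (v0 ≤ x 0) ∧ (v4 ≤ x 4) ∧ ((v0) + ((min (x 0) (x 3) ^^^ min (x 1) (x 4))) + (v4) = (x 1) + (x 3) + (x 5)) ∧ (min (v0) (x 3) = min (x 0) (x 3)) ∧ (min (x 1) (v4) = min (x 1) (x 4)) ∧ (min ((min (x 0) (x 3) ^^^ min (x 1) (x 4))) (x 5) = (min (x 0) (x 3) ^^^ min (x 1) (x 4))) := ⟨(x 0 - (min (((x 0 + x 2 + x 4) - (x 1 + x 3 + x 5)) - (x 2 - (min (x 0) (x 3) ^^^ min (x 1) (x 4)))) (x 0 - min (x 0) (x 3)))), (x 4 - ((((x 0 + x 2 + x 4) - (x 1 + x 3 + x 5)) - (x 2 - (min (x 0) (x 3) ^^^ min (x 1) (x 4)))) - (min (((x 0 + x 2 + x 4) - (x 1 + x 3 + x 5)) - (x 2 - (min (x 0) (x 3) ^^^ min (x 1) (x 4)))) (x 0 - min (x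 0) (x 3))))), by omega, by omega, by omega, by omega, by omega, by omega⟩
          refine ⟨![v0, x 1, (min (x 0) (x 3) ^^^ min (x 1) (x 4)), x 3, v4, x 5], ⟨?_, ?_, ?_⟩, ?_⟩
          · intro heq
            have q2 : ((min (x 0) (x 3) ^^^ min (x 1) (x 4))) = x 2 := congrFun heq 2
            have q0 : (v0) = x 0 := congrFun heq 0
            have q4 : (v4) = x 4 := congrFun heq 4
            omega
          · intro j; fin_cases j
            · show (v0) ≤ x 0; omega
            · show (x 1) ≤ x 1; omega
            · show ((min (x 0) (x 3) ^^^ min (x 1) (x 4))) ≤ x 2; omega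
            · show (x 3) ≤ x 3; omega
            · show (v4) ≤ x 4; omega
            · show (x 5) ≤ x 5; omega
          · exact Or.inl ⟨rfl, rfl, rfl⟩
          · show ((v0) + ((min (x 0) (x 3) ^^^ min (x 1) (x 4))) + (v4) = (x 1) + (x 3) + (x 5)) ∧ (min (v0) (x 3) ^^^ min (x 1) (v4) ^^^ min ((min (x 0) (x 3) ^^^ min (x 1) (x 4))) (x 5) = 0)
            refine ⟨by omega, ?_⟩
            rw [hB6, hB4, hB5]
            exact xab (min (x 0) (x 3)) (min (x 1) (x 4))
    · rcases xtri (min (x 0) (x 3)) (min (x 1) (x 4)) (min (x 2) (x 5)) with hk | hk | hk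
      · by_cases hA : (min (x 1) (x 4) ^^^ min (x 2) (x 5)) + ((x 1 + x 3 + x 5) - (x 0 + x 2 + x 4)) ≤ x 3
        ·
          obtain ⟨v3, v0, hA1, hA2, hA3, hA4, hA5⟩ : ∃ v3 v0 : ℕ, (v3 ≤ x 3) ∧ (v0 ≤ x 0) ∧ (v3 < x 3) ∧ ((v0) + (x 2) + (x 4) = (x 1) + (v3) + (x 5)) ∧ (min (v0) (v3) = (min (x 1) (x 4) ^^^ min (x 2) (x 5))) := ⟨((min (x 1) (x 4) ^^^ min (x 2) (x 5)) + ((x 3 - ((x 1 + x 3 + x 5) - (x 0 + x 2 + x 4))) - x 0)), ((min (x 1) (x 4) ^^^ min (x 2) (x 5)) + (x 0 - (x 3 - ((x 1 + x 3 + x 5) - (x 0 + x 2 + x 4))))), by omega, by omega, by omega, by omega, by omega⟩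
          refine ⟨![v0, x 1, x 2, v3, x 4, x 5], ⟨?_, ?_, ?_⟩, ?_⟩
          · intro heq
            have q3 : (v3) = x 3 := congrFun heq 3
            omega
          · intro j; fin_cases j
            · show (v0) ≤ x 0; omega
            · show (x 1) ≤ x 1; omega
            · show (x 2) ≤ x 2; omega
            · show (v3) ≤ x 3; omega
            · show (x 4) ≤ x 4; omega
            · show (x 5) ≤ x 5; omega
          · exact Or.inr (Or.inr (Or.inl ⟨rfl, rfl, rfl, rfl⟩))
          · show ((v0) + (x 2) + (x 4) = (x 1) + (v3) + (x 5)) ∧ (min (v0) (v3) ^^^ min (x 1) (x 4) ^^^ min (x 2) (x 5) = 0)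
            refine ⟨by omega, ?_⟩
            rw [hA5]
            exact xbc (min (x 1) (x 4)) (min (x 2) (x 5))
        ·
          obtain ⟨v1, v5, hB1, hB2, hB3, hB4, hB5, hB6⟩ : ∃ v1 v5 : ℕ, (v1 ≤ x 1) ∧ (v5 ≤ x 5) ∧ ((x 0) + (x 2) + (x 4) = (v1) + ((min (x 1) (x 4) ^^^ min (x 2) (x 5))) + (v5)) ∧ (min (v1) (x 4) = min (x 1) (x 4)) ∧ (min (x 2) (v5) = min (x 2) (x 5)) ∧ (min (x 0) ((min (x 1) (x 4) ^^^ min (x 2) (x 5))) = (min (x 1) (x 4) ^^^ min (x 2) (x 5))) := ⟨(x 1 - (min (((x 1 + x 3 + x 5) - (x 0 + x 2 + x 4)) - (x 3 - (min (x 1) (x 4) ^^^ min (x 2) (x 5)))) (x 1 - min (x 1) (x 4)))), (x 5 - ((((x 1 + x 3 + x 5) - (x 0 + x 2 + x 4)) - (x 3 - (min (x 1) (x 4) ^^^ min (x 2) (x 5)))) - (min (((x 1 + x 3 + x 5) - (x 0 + x 2 + x 4)) - (x 3 - (min (x 1) (x 4) ^^^ min (x 2) (x 5)))) (x 1 - min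 (x 1) (x 4))))), by omega, by omega, by omega, by omega, by omega, by omega⟩
          refine ⟨![x 0, v1, x 2, (min (x 1) (x 4) ^^^ min (x 2) (x 5)), x 4, v5], ⟨?_, ?_, ?_⟩, ?_⟩
          · intro heq
            have q3 : ((min (x 1) (x 4) ^^^ min (x 2) (x 5))) = x 3 := congrFun heq 3
            have q1 : (v1) = x 1 := congrFun heq 1
            have q5 : (v5) = x 5 := congrFun heq 5
            omega
          · intro j; fin_cases j
            · show (x 0) ≤ x 0; omega
            · show (v1) ≤ x 1; omega
            · show (x 2) ≤ x 2; omega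
            · show ((min (x 1) (x 4) ^^^ min (x 2) (x 5))) ≤ x 3; omega
            · show (x 4) ≤ x 4; omega
            · show (v5) ≤ x 5; omega
          · exact Or.inr (Or.inl ⟨rfl, rfl, rfl⟩)
          · show ((x 0) + (x 2) + (x 4) = (v1) + ((min (x 1) (x 4) ^^^ min (x 2) (x 5))) + (v5)) ∧ (min (x 0) ((min (x 1) (x 4) ^^^ min (x 2) (x 5))) ^^^ min (v1) (x 4) ^^^ min (x 2) (v5) = 0)
            refine ⟨by omega, ?_⟩
            rw [hB6, hB4, hB5]
            exact xbc (min (x 1) (x 4)) (min (x 2) (x 5))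
      · by_cases hA : (min (x 2) (x 5) ^^^ min (x 0) (x 3)) + ((x 1 + x 3 + x 5) - (x 0 + x 2 + x 4)) ≤ x 1
        ·
          obtain ⟨v1, v4, hA1, hA2, hA3, hA4, hA5⟩ : ∃ v1 v4 : ℕ, (v1 ≤ x 1) ∧ (v4 ≤ x 4) ∧ (v1 < x 1) ∧ ((x 0) + (x 2) + (v4) = (v1) + (x 3) + (x 5)) ∧ (min (v1) (v4) = (min (x 2) (x 5) ^^^ min (x 0) (x 3))) := ⟨((min (x 2) (x 5) ^^^ min (x 0) (x 3)) + ((x 1 - ((x 1 + x 3 + x 5) - (x 0 + x 2 + x 4))) - x 4)), ((min (x 2) (x 5) ^^^ min (x 0) (x 3)) + (x 4 - (x 1 - ((x 1 + x 3 + x 5) - (x 0 + x 2 + x 4))))), by omega, by omega, by omega, by omega, by omega⟩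
          refine ⟨![x 0, v1, x 2, x 3, v4, x 5], ⟨?_, ?_, ?_⟩, ?_⟩
          · intro heq
            have q1 : (v1) = x 1 := congrFun heq 1
            omega
          · intro j; fin_cases j
            · show (x 0) ≤ x 0; omega
            · show (v1) ≤ x 1; omega
            · show (x 2) ≤ x 2; omega
            · show (x 3) ≤ x 3; omega
            · show (v4) ≤ x 4; omega
            · show (x 5) ≤ x 5; omega
          · exact Or.inr (Or.inr (Or.inr (Or.inl ⟨rfl, rfl, rfl, rfl⟩)))
          · show ((x 0) + (x 2) + (v4) = (v1) + (x 3) + (x 5)) ∧ (min (x 0) (x 3) ^^^ min (v1) (v4) ^^^ min (x 2) (x 5) = 0)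
            refine ⟨by omega, ?_⟩
            rw [hA5]
            exact xac (min (x 0) (x 3)) (min (x 2) (x 5))
        ·
          obtain ⟨v3, v5, hB1, hB2, hB3, hB4, hB5, hB6⟩ : ∃ v3 v5 : ℕ, (v3 ≤ x 3) ∧ (v5 ≤ x 5) ∧ ((x 0) + (x 2) + (x 4) = ((min (x 2) (x 5) ^^^ min (x 0) (x 3))) + (v3) + (v5)) ∧ (min (x 0) (v3) = min (x 0) (x 3)) ∧ (min (x 2) (v5) = min (x 2) (x 5)) ∧ (min ((min (x 2) (x 5) ^^^ min (x 0) (x 3))) (x 4) = (min (x 2) (x 5) ^^^ min (x 0) (x 3))) := ⟨(x 3 - (min (((x 1 + x 3 + x 5) - (x 0 + x 2 + x 4)) - (x 1 - (min (x 2) (x 5) ^^^ min (x 0) (x 3)))) (x 3 - min (x 0) (x 3)))), (x 5 - ((((x 1 + x 3 + x 5) - (x 0 + x 2 + x 4)) - (x 1 - (min (x 2) (x 5) ^^^ min (x 0) (x 3)))) - (min (((x 1 + x 3 + x 5) - (x 0 + x 2 + x 4)) - (x 1 - (min (x 2) (x 5) ^^^ min (x 0) (x 3)))) (x 3 - min (x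 0) (x 3))))), by omega, by omega, by omega, by omega, by omega, by omega⟩
          refine ⟨![x 0, (min (x 2) (x 5) ^^^ min (x 0) (x 3)), x 2, v3, x 4, v5], ⟨?_, ?_, ?_⟩, ?_⟩
          · intro heq
            have q1 : ((min (x 2) (x 5) ^^^ min (x 0) (x 3))) = x 1 := congrFun heq 1
            have q3 : (v3) = x 3 := congrFun heq 3
            have q5 : (v5) = x 5 := congrFun heq 5
            omega
          · intro j; fin_cases j
            · show (x 0) ≤ x 0; omega
            · show ((min (x 2) (x 5) ^^^ min (x 0) (x 3))) ≤ x 1; omega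
            · show (x 2) ≤ x 2; omega
            · show (v3) ≤ x 3; omega
            · show (x 4) ≤ x 4; omega
            · show (v5) ≤ x 5; omega
          · exact Or.inr (Or.inl ⟨rfl, rfl, rfl⟩)
          · show ((x 0) + (x 2) + (x 4) = ((min (x 2) (x 5) ^^^ min (x 0) (x 3))) + (v3) + (v5)) ∧ (min (x 0) (v3) ^^^ min ((min (x 2) (x 5) ^^^ min (x 0) (x 3))) (x 4) ^^^ min (x 2) (v5) = 0)
            refine ⟨by omega, ?_⟩
            rw [hB6, hB4, hB5]
            exact xac (min (x 0) (x 3)) (min (x 2) (x 5))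
      · by_cases hA : (min (x 0) (x 3) ^^^ min (x 1) (x 4)) + ((x 1 + x 3 + x 5) - (x 0 + x 2 + x 4)) ≤ x 5
        ·
          obtain ⟨v5, v2, hA1, hA2, hA3, hA4, hA5⟩ : ∃ v5 v2 : ℕ, (v5 ≤ x 5) ∧ (v2 ≤ x 2) ∧ (v5 < x 5) ∧ ((x 0) + (v2) + (x 4) = (x 1) + (x 3) + (v5)) ∧ (min (v2) (v5) = (min (x 0) (x 3) ^^^ min (x 1) (x 4))) := ⟨((min (x 0) (x 3) ^^^ min (x 1) (x 4)) + ((x 5 - ((x 1 + x 3 + x 5) - (x 0 + x 2 + x 4))) - x 2)), ((min (x 0) (x 3) ^^^ min (x 1) (x 4)) + (x 2 - (x 5 - ((x 1 + x 3 + x 5) - (x 0 + x 2 + x 4))))), by omega, by omega, by omega, by omega, by omega⟩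
          refine ⟨![x 0, x 1, v2, x 3, x 4, v5], ⟨?_, ?_, ?_⟩, ?_⟩
          · intro heq
            have q5 : (v5) = x 5 := congrFun heq 5
            omega
          · intro j; fin_cases j
            · show (x 0) ≤ x 0; omega
            · show (x 1) ≤ x 1; omega
            · show (v2) ≤ x 2; omega
            · show (x 3) ≤ x 3; omega
            · show (x 4) ≤ x 4; omega
            · show (v5) ≤ x 5; omega
          · exact Or.inr (Or.inr (Or.inr (Or.inr (⟨rfl, rfl, rfl, rfl⟩))))
          · show ((x 0) + (v2) + (x 4) = (x 1) + (x 3) + (v5)) ∧ (min (x 0) (x 3) ^^^ min (x 1) (x 4) ^^^ min (v2) (v5) = 0)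
            refine ⟨by omega, ?_⟩
            rw [hA5]
            exact xab (min (x 0) (x 3)) (min (x 1) (x 4))
        ·
          obtain ⟨v3, v1, hB1, hB2, hB3, hB4, hB5, hB6⟩ : ∃ v3 v1 : ℕ, (v3 ≤ x 3) ∧ (v1 ≤ x 1) ∧ ((x 0) + (x 2) + (x 4) = (v1) + (v3) + ((min (x 0) (x 3) ^^^ min (x 1) (x 4)))) ∧ (min (x 0) (v3) = min (x 0) (x 3)) ∧ (min (v1) (x 4) = min (x 1) (x 4)) ∧ (min (x 2) ((min (x 0) (x 3) ^^^ min (x 1) (x 4))) = (min (x 0) (x 3) ^^^ min (x 1) (x 4))) := ⟨(x 3 - (min (((x 1 + x 3 + x 5) - (x 0 + x 2 + x 4)) - (x 5 - (min (x 0) (x 3) ^^^ min (x 1) (x 4)))) (x 3 - min (x 0) (x 3)))), (x 1 - ((((x 1 + x 3 + x 5) - (x 0 + x 2 + x 4)) - (x 5 - (min (x 0) (x 3) ^^^ min (x 1) (x 4)))) - (min (((x 1 + x 3 + x 5) - (x 0 + x 2 + x 4)) - (x 5 - (min (x 0) (x 3) ^^^ min (x 1) (x 4)))) (x 3 - min (x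 0) (x 3))))), by omega, by omega, by omega, by omega, by omega, by omega⟩
          refine ⟨![x 0, v1, x 2, v3, x 4, (min (x 0) (x 3) ^^^ min (x 1) (x 4))], ⟨?_, ?_, ?_⟩, ?_⟩
          · intro heq
            have q5 : ((min (x 0) (x 3) ^^^ min (x 1) (x 4))) = x 5 := congrFun heq 5
            have q3 : (v3) = x 3 := congrFun heq 3
            have q1 : (v1) = x 1 := congrFun heq 1
            omega
          · intro j; fin_cases j
            · show (x 0) ≤ x 0; omega
            · show (v1) ≤ x 1; omega
            · show (x 2) ≤ x 2; omega
            · show (v3) ≤ x 3; omega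
            · show (x 4) ≤ x 4; omega
            · show ((min (x 0) (x 3) ^^^ min (x 1) (x 4))) ≤ x 5; omega
          · exact Or.inr (Or.inl ⟨rfl, rfl, rfl⟩)
          · show ((x 0) + (x 2) + (x 4) = (v1) + (v3) + ((min (x 0) (x 3) ^^^ min (x 1) (x 4)))) ∧ (min (x 0) (v3) ^^^ min (v1) (x 4) ^^^ min (x 2) ((min (x 0) (x 3) ^^^ min (x 1) (x 4))) = 0)
            refine ⟨by omega, ?_⟩
            rw [hB6, hB4, hB5]
            exact xab (min (x 0) (x 3)) (min (x 1) (x 4))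

lemma move_lt {x y : Fin 6 → ℕ} (hne : y ≠ x) (hle : ∀ j, y j ≤ x j) :
    y 0 + y 1 + y 2 + y 3 + y 4 + y 5 < x 0 + x 1 + x 2 + x 3 + x 4 + x 5 := by
  have l0 := hle 0; have l1 := hle 1; have l2 := hle 2
  have l3 := hle 3; have l4 := hle 4; have l5 := hle 5
  by_contra hcon
  exact ne6 hne ⟨by omega, by omega, by omega, by omega, by omega, by omega⟩

lemma main : ∀ N (x : Fin 6 → ℕ), x 0 + x 1 + x 2 + x 3 + x 4 + x 5 < N →
    (Cv x → IsP (ecnMove 6 {2, 3} 3) x) ∧ (¬Cv x → IsN (ecnMove 6 {2, 3} 3) x) := by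
  intro N
  induction N with
  | zero => intro x hx; exact (Nat.not_lt_zero _ hx).elim
  | succ N ih =>
    intro x hx
    constructor
    · intro hC y hmv
      obtain ⟨hne, hle, hsup⟩ := (move_iff x y).mp hmv
      have hlt := move_lt hne hle
      exact (ih y (by omega)).2 (key1 x y hC hne hle hsup)
    · intro hnC
      obtain ⟨y, ⟨hne, hle, hsup⟩, hCy⟩ := key2 x hnC
      have hmv : ecnMove 6 {2, 3} 3 x y := (move_iff x y).mpr ⟨hne, hle, hsup⟩
      have h1 := move_lt hne hle
      refine IsN.intro x y hmv ?_
      intro z hz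
      obtain ⟨hne', hle', hsup'⟩ := (move_iff y z).mp hz
      have h2 := move_lt hne' hle'
      exact (ih z (by omega)).2 (key1 y z hCy hne' hle' hsup')

lemma np {x : Fin 6 → ℕ} (h : IsN (ecnMove 6 {2, 3} 3) x) :
    IsP (ecnMove 6 {2, 3} 3) x → False := by
  induction h
  rename_i x y hxy hy ih
  intro hP
  have hN : IsN (ecnMove 6 {2, 3} 3) y := hP y hxy
  cases hN with
  | intro a b hab hb => exact ih b hab hb

theorem ecn6_23_3_P_iff (n : Fin 6 → ℕ) :
    IsP (ecnMove 6 {2, 3} 3) n ↔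
      cyc 6 (fun x => x 0 + x 2 + x 4 = x 1 + x 3 + x 5 ∧ x 0 ^^^ x 1 ^^^ x 2 = 0 ∧
        x 0 ≤ x 3 ∧ x 1 ≤ x 4 ∧ x 2 ≤ x 5) n := by
  rw [cyc_iff]
  constructor
  · intro hP
    by_contra hnC
    exact np ((main (n 0 + n 1 + n 2 + n 3 + n 4 + n 5 + 1) n (by omega)).2 hnC) hP
  · intro hC
    exact (main (n 0 + n 1 + n 2 + n 3 + n 4 + n 5 + 1) n (by omega)).1 hC
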